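/- In binary-state Bayesian persuasion where every strategy is uniquely optimal for some prior, the unit interval [0,1] of priors is partitioned into n = |𝒮| closed intervals S₁,…,Sₙ, with each strategy sᵢ the unique optimal strategy at every interior point of Sᵢ. In particular, there is a constant C > 0 lower-bounding the length of every interval, and for any two distinct strategies s, s', the slopes of μ ↦ u(s,μ) and μ ↦ u(s',μ) differ (by at least some c₁ > 0). -/

import Mathlib

/-- In binary-state Bayesian persuasion (receiver utility
`u(s,μ) = (1-μ)·u₀ s + μ·u₁ s`), if every strategy is uniquely optimal for some
prior, then `[0,1]` is partitioned into `n = |𝒮|` closed intervals (described by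
monotone endpoints `e 0 = 0 ≤ … ≤ e n = 1` and an enumeration `σ` of the
strategies) such that `σ i` is the unique optimal strategy at each interior point
of the `i`-th interval; moreover some `C > 0` lower-bounds every interval length,
and the slopes of distinct strategies differ by at least some `c₁ > 0`. -/
theorem persuasion_interval_structure {S : Type*} [Fintype S] [Nonempty S]
    (u0 u1 : S → ℝ)
    (hu0 : ∀ s, u0 s ∈ Set.Icc (0:ℝ) 1) (hu1 : ∀ s, u1 s ∈ Set.Icc (0:ℝ) 1)
    (hstrict : ∀ s : S, ∃ μ ∈ Set.Icc (0:ℝ) 1,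
      ∀ s', s' ≠ s → (1 - μ) * u0 s' + μ * u1 s' < (1 - μ) * u0 s + μ * u1 s) :
    ∃ (e : Fin (Fintype.card S + 1) → ℝ) (σ : Fin (Fintype.card S) ≃ S)
      (C c₁ : ℝ),
      0 < C ∧ 0 < c₁ ∧
      Monotone e ∧ e 0 = 0 ∧ e (Fin.last (Fintype.card S)) = 1 ∧
      (∀ i : Fin (Fintype.card S), C ≤ e i.succ - e i.castSucc) ∧
      (∀ i : Fin (Fintype.card S), ∀ μ ∈ Set.Ioo (e i.castSucc) (e i.succ),
        ∀ s', s' ≠ σ i →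
          (1 - μ) * u0 s' + μ * u1 s' < (1 - μ) * u0 (σ i) + μ * u1 (σ i)) ∧
      (∀ s s' : S, s ≠ s' →
        c₁ ≤ |(u1 s - u0 s) - (u1 s' - u0 s')|) := by
  classical
  set n := Fintype.card S with hn
  have hn1 : 1 ≤ n := Fintype.card_pos
  set d : S → ℝ := fun s => u1 s - u0 s with hd
  choose m hm hmopt using hstrict
  -- d is injective
  have hdinj : Function.Injective d := by
    intro s s' h
    by_contra hne
    have h1 := hmopt s s' (Ne.symm hne)
    have h2 := hmopt s' s hne
    have heq : u1 s - u0 s = u1 s' - u0 s' := h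
    have hc : ∀ μ : ℝ, ((1-μ)*u0 s' + μ*u1 s') - ((1-μ)*u0 s + μ*u1 s) = u0 s' - u0 s := by
      intro μ; linear_combination -μ * heq
    linarith [hc (m s), hc (m s')]
  -- order the strategies by slope
  have hcard : (Finset.univ.image d).card = n := by
    rw [Finset.card_image_of_injective _ hdinj, Finset.card_univ]
  set o := (Finset.univ.image d).orderIsoOfFin hcard with ho
  have hbij : Function.Bijective
      (fun s : S => (⟨d s, Finset.mem_image_of_mem d (Finset.mem_univ s)⟩ :
        (Finset.univ.image d))) := by
    rw [Fintype.bijective_iff_injective_and_card]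
    constructor
    · intro a b hab
      apply hdinj
      simpa using congrArg Subtype.val hab
    · simp [Fintype.card_coe, hcard]; exact hn.symm
  set eS := Equiv.ofBijective _ hbij with heS
  set σ : Fin n ≃ S := o.toEquiv.trans eS.symm with hσ
  have hσd : ∀ i : Fin n, d (σ i) = ((o i : ℝ)) := by
    intro i
    have h1 : eS (σ i) = o i := by
      simp [hσ, Equiv.apply_symm_apply]
    have h2 : ((eS (σ i) : (Finset.univ.image d))).val = d (σ i) := rfl
    rw [h1] at h2; exact h2.symm
  have hσlt : ∀ i j : Fin n, i < j → d (σ i) < d (σ j) := by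
    intro i j hij
    rw [hσd, hσd]
    exact_mod_cast o.strictMono hij
  -- crossing points
  set cr : S → S → ℝ := fun s s' => (u0 s - u0 s') / (d s' - d s) with hcr
  have hcrkey : ∀ s s' : S, d s < d s' → ∀ μ : ℝ,
      ((1 - μ) * u0 s' + μ * u1 s') - ((1 - μ) * u0 s + μ * u1 s)
        = (d s' - d s) * (μ - cr s s') := by
    intro s s' h μ
    have hne : d s' - d s ≠ 0 := by linarith
    have h0 : (d s' - d s) * cr s s' = u0 s - u0 s' := by
      rw [hcr]; field_simp
    have hds : d s = u1 s - u0 s := rfl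
    have hds' : d s' = u1 s' - u0 s' := rfl
    rw [hds, hds'] at h0 ⊢
    linear_combination h0
  have hlt : ∀ s s' : S, d s < d s' → ∀ μ : ℝ, cr s s' < μ →
      (1-μ)*u0 s + μ*u1 s < (1-μ)*u0 s' + μ*u1 s' := by
    intro s s' h μ hμ
    have hk := hcrkey s s' h μ
    nlinarith [mul_pos (by linarith : (0:ℝ) < d s' - d s) (by linarith : (0:ℝ) < μ - cr s s')]
  have hgt : ∀ s s' : S, d s < d s' → ∀ μ : ℝ, μ < cr s s' →
      (1-μ)*u0 s' + μ*u1 s' < (1-μ)*u0 s + μ*u1 s := by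
    intro s s' h μ hμ
    have hk := hcrkey s s' h μ
    nlinarith [mul_pos (by linarith : (0:ℝ) < d s' - d s) (by linarith : (0:ℝ) < cr s s' - μ)]
  have hmcr1 : ∀ s s', d s < d s' → m s < cr s s' := by
    intro s s' h
    have hne : s' ≠ s := by
      intro he; rw [he] at h; exact lt_irrefl _ h
    have h1 := hmopt s s' hne
    have hk := hcrkey s s' h (m s)
    by_contra hc
    push_neg at hc
    have := mul_nonneg (by linarith : (0:ℝ) ≤ d s' - d s) (by linarith : (0:ℝ) ≤ m s - cr s s')
    linarith
  have hmcr2 : ∀ s s', d s < d s' → cr s s' < m s' := by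
    intro s s' h
    have hne : s ≠ s' := by
      intro he; rw [he] at h; exact lt_irrefl _ h
    have h1 := hmopt s' s hne
    have hk := hcrkey s s' h (m s')
    by_contra hc
    push_neg at hc
    have := mul_nonpos_of_nonneg_of_nonpos (by linarith : (0:ℝ) ≤ d s' - d s)
      (by linarith : m s' - cr s s' ≤ 0)
    linarith
  -- the endpoint sequence
  set E : ℕ → ℝ := fun i =>
    if h : 0 < i ∧ i < n then cr (σ ⟨i-1, by omega⟩) (σ ⟨i, h.2⟩)
    else if i = 0 then 0 else 1 with hE
  have hE0 : E 0 = 0 := by simp [hE]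
  have hEn : ∀ i, n ≤ i → E i = 1 := by
    intro i hi
    have : ¬ (0 < i ∧ i < n) := by omega
    have hi0 : i ≠ 0 := by omega
    simp [hE, this, hi0]
  have hEmid : ∀ i (h1 : 0 < i) (h2 : i < n),
      E i = cr (σ ⟨i-1, by omega⟩) (σ ⟨i, h2⟩) := by
    intro i h1 h2
    simp only [hE]
    rw [dif_pos ⟨h1, h2⟩]
  have hEstep : ∀ i, i < n → E i < E (i+1) := by
    intro i hi
    rcases Nat.eq_zero_or_pos i with h0 | h0
    · subst h0
      rcases eq_or_lt_of_le hn1 with h1 | h1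
      · rw [hE0, hEn 1 (by omega)]; norm_num
      · rw [hE0, hEmid 1 (by omega) (by omega)]
        have hσ01 : d (σ ⟨0, by omega⟩) < d (σ ⟨1, h1⟩) := hσlt _ _ (by simp [Fin.lt_def])
        have := hmcr1 _ _ hσ01
        have := (hm (σ ⟨0, by omega⟩)).1
        show 0 < cr (σ ⟨0, by omega⟩) (σ ⟨1, h1⟩); linarith
    · rcases eq_or_lt_of_le (by omega : i + 1 ≤ n) with h1 | h1
      · rw [hEmid i h0 hi, hEn (i+1) (by omega)]
        have hσi : d (σ ⟨i-1, by omega⟩) < d (σ ⟨i, hi⟩) := hσlt _ _ (by simp [Fin.lt_def]; omega)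
        have := hmcr2 _ _ hσi
        have := (hm (σ ⟨i, hi⟩)).2
        linarith
      · rw [hEmid i h0 hi, hEmid (i+1) (by omega) h1]
        have hσi : d (σ ⟨i-1, by omega⟩) < d (σ ⟨i, hi⟩) := hσlt _ _ (by simp [Fin.lt_def]; omega)
        have hσi' : d (σ ⟨i, hi⟩) < d (σ ⟨i+1, h1⟩) := hσlt _ _ (by simp [Fin.lt_def])
        have ha := hmcr2 _ _ hσi
        have hb := hmcr1 _ _ hσi'
        have hsimp : (⟨i+1-1, by omega⟩ : Fin n) = ⟨i, hi⟩ := by simp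
        rw [hsimp]
        linarith
  have hElt : ∀ j, j ≤ n → ∀ i, i < j → E i < E j := by
    intro j
    induction j with
    | zero => omega
    | succ j IHj =>
      intro hj i hij
      rcases eq_or_lt_of_le (by omega : i ≤ j) with h | h
      · subst h; exact hEstep i (by omega)
      · exact lt_trans (IHj (by omega) i h) (hEstep j (by omega))
  have hEle : ∀ i j, i ≤ j → j ≤ n → E i ≤ E j := by
    intro i j hij hjn
    rcases eq_or_lt_of_le hij with h | h
    · subst h; exact le_rfl
    · exact le_of_lt (hElt j hjn i h)
  -- left dominance: for μ above E i, σ i beats all σ j with j < i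
  have LA : ∀ k : ℕ, ∀ i : Fin n, (i : ℕ) = k → ∀ j : Fin n, j < i → ∀ μ : ℝ,
      E i < μ → (1-μ)*u0 (σ j) + μ*u1 (σ j) < (1-μ)*u0 (σ i) + μ*u1 (σ i) := by
    intro k
    induction k using Nat.strong_induction_on with
    | _ k IH =>
      intro i hik j hji μ hμ
      have hipos : 0 < (i : ℕ) := by
        rcases Nat.eq_zero_or_pos (i : ℕ) with h | h
        · exact absurd (Fin.lt_def.mp hji) (by omega)
        · exact h
      set i' : Fin n := ⟨(i : ℕ) - 1, by omega⟩ with hi'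
      have hEi : E i = cr (σ i') (σ i) := by
        rw [hEmid (i : ℕ) hipos i.isLt]
      have hdi : d (σ i') < d (σ i) := hσlt _ _ (Fin.lt_def.mpr (by show (i:ℕ) - 1 < i; omega))
      have step : (1-μ)*u0 (σ i') + μ*u1 (σ i') < (1-μ)*u0 (σ i) + μ*u1 (σ i) :=
        hlt _ _ hdi μ (by rw [← hEi]; exact hμ)
      rcases eq_or_lt_of_le (by simp [Fin.le_def, hi']; omega : j ≤ i') with h | h
      · rw [h]; exact step
      · have hμ' : E i' < μ := lt_trans (hElt (i : ℕ) (le_of_lt i.isLt) _ (by show (i:ℕ) - 1 < i; omega)) hμ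
        exact lt_trans (IH ((i : ℕ) - 1) (by omega) i' rfl j h μ hμ') step
  -- right dominance: for μ below E (i+1), σ i beats all σ j with j > i
  have LB : ∀ k : ℕ, ∀ j : Fin n, (j : ℕ) = k → ∀ i : Fin n, i < j → ∀ μ : ℝ,
      μ < E ((i : ℕ) + 1) → (1-μ)*u0 (σ j) + μ*u1 (σ j) < (1-μ)*u0 (σ i) + μ*u1 (σ i) := by
    intro k
    induction k using Nat.strong_induction_on with
    | _ k IH =>
      intro j hjk i hij μ hμ
      have hjpos : 0 < (j : ℕ) := by
        have := Fin.lt_def.mp hij; omega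
      set j' : Fin n := ⟨(j : ℕ) - 1, by omega⟩ with hj'
      have hEj : E j = cr (σ j') (σ j) := by
        rw [hEmid (j : ℕ) hjpos j.isLt]
      have hij' : (i : ℕ) + 1 ≤ (j : ℕ) := Fin.lt_def.mp hij
      have hμj : μ < E (j : ℕ) :=
        lt_of_lt_of_le hμ (hEle _ _ hij' (le_of_lt j.isLt))
      have hdj : d (σ j') < d (σ j) := hσlt _ _ (Fin.lt_def.mpr (by show (j:ℕ) - 1 < j; omega))
      have step : (1-μ)*u0 (σ j) + μ*u1 (σ j) < (1-μ)*u0 (σ j') + μ*u1 (σ j') :=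
        hgt _ _ hdj μ (by rw [← hEj]; exact hμj)
      rcases eq_or_lt_of_le (by simp [Fin.le_def, hj']; omega : i ≤ j') with h | h
      · rw [← h] at step; exact step
      · exact lt_trans step (IH ((j : ℕ) - 1) (by omega) j' rfl i h μ hμ)
  -- minimum interval length
  obtain ⟨i0, -, hC⟩ := Finset.exists_min_image (Finset.univ : Finset (Fin n))
    (fun i => E ((i : ℕ) + 1) - E (i : ℕ)) ⟨⟨0, hn1⟩, Finset.mem_univ _⟩
  set C := E ((i0 : ℕ) + 1) - E (i0 : ℕ) with hCdef
  have hCpos : 0 < C := by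
    have := hEstep (i0 : ℕ) i0.isLt
    simp [hCdef]; linarith
  -- minimum slope gap
  set P := (Finset.univ : Finset (S × S)).filter (fun p => p.1 ≠ p.2) with hP
  by_cases hPne : P.Nonempty
  · obtain ⟨p0, hp0, hc₁⟩ := Finset.exists_min_image P (fun p => |d p.1 - d p.2|) hPne
    set c₁ := |d p0.1 - d p0.2| with hc₁def
    have hc₁pos : 0 < c₁ := by
      rw [hc₁def, abs_pos, sub_ne_zero]
      have hne : p0.1 ≠ p0.2 := by
        simpa [hP] using hp0
      exact fun h => hne (hdinj h)
    refine ⟨fun i => E (i : ℕ), σ, C, c₁, hCpos, hc₁pos, ?_, ?_, ?_, ?_, ?_, ?_⟩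
    · intro i j hij
      exact hEle _ _ (Fin.le_def.mp hij) (by omega)
    · simpa using hE0
    · simpa using hEn n le_rfl
    · intro i
      have := hC i (Finset.mem_univ i)
      simpa [Fin.val_succ, Fin.coe_castSucc] using this
    · intro i μ hμ s' hs'
      set j := σ.symm s' with hj
      have hjs : σ j = s' := σ.apply_symm_apply s'
      have hji : j ≠ i := by
        intro h; apply hs'; rw [← hjs, h]
      rcases lt_or_gt_of_ne hji with h | h
      · have := LA (i : ℕ) i rfl j h μ (by simpa [Fin.coe_castSucc] using hμ.1)
        rwa [hjs] at this
      · have := LB (j : ℕ) j rfl i h μ (by simpa [Fin.val_succ] using hμ.2)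
        rwa [hjs] at this
    · intro s s' hss'
      have hmem : (s, s') ∈ P := by simp [hP, hss']
      have := hc₁ (s, s') hmem
      calc c₁ ≤ |d s - d s'| := this
        _ = |(u1 s - u0 s) - (u1 s' - u0 s')| := rfl
  · -- no distinct pair: n = 1
    refine ⟨fun i => E (i : ℕ), σ, C, 1, hCpos, one_pos, ?_, ?_, ?_, ?_, ?_, ?_⟩
    · intro i j hij
      exact hEle _ _ (Fin.le_def.mp hij) (by omega)
    · simpa using hE0
    · simpa using hEn n le_rfl
    · intro i
      have := hC i (Finset.mem_univ i)
      simpa [Fin.val_succ, Fin.coe_castSucc] using this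
    · intro i μ hμ s' hs'
      set j := σ.symm s' with hj
      have hjs : σ j = s' := σ.apply_symm_apply s'
      have hji : j ≠ i := by
        intro h; apply hs'; rw [← hjs, h]
      rcases lt_or_gt_of_ne hji with h | h
      · have := LA (i : ℕ) i rfl j h μ (by simpa [Fin.coe_castSucc] using hμ.1)
        rwa [hjs] at this
      · have := LB (j : ℕ) j rfl i h μ (by simpa [Fin.val_succ] using hμ.2)
        rwa [hjs] at this
    · intro s s' hss'
      exact absurd ⟨(s, s'), by simp [hP, hss']⟩ hPne
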